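/- Let h : ℕ → ℕ and p ∈ (0,1), and suppose there exists k ∈ (0,1) such that for all sufficiently large N: (1 + (1/p - 1)·k)·h(N) > N ≥ h(N) > p·N > 0. Then for all sufficiently large N, if X_N is a binomial random variable with parameters N and p, we have P(X_N = h(N)) ≤ P(X_N ≥ h(N)) ≤ (1/(1-k))·P(X_N = h(N)). -/

import Mathlib

open Filter

theorem binomial_tail_comparable_to_point_mass
    (h : ℕ → ℕ) (p : ℝ) (hp : p ∈ Set.Ioo (0:ℝ) 1)
    (k : ℝ) (hk : k ∈ Set.Ioo (0:ℝ) 1)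
    (hcond : ∀ᶠ N : ℕ in atTop,
      (1 + (1/p - 1) * k) * (h N : ℝ) > (N : ℝ) ∧ N ≥ h N ∧
        (h N : ℝ) > p * N ∧ 0 < p * (N : ℝ)) :
    ∀ᶠ N : ℕ in atTop,
      (p ^ (h N) * (1-p) ^ (N - h N) * (N.choose (h N)) : ℝ) ≤
        ∑ j ∈ Finset.Icc (h N) N, p ^ j * (1-p) ^ (N - j) * (N.choose j) ∧
      ∑ j ∈ Finset.Icc (h N) N, p ^ j * (1-p) ^ (N - j) * (N.choose j) ≤
        (1/(1-k)) * (p ^ (h N) * (1-p) ^ (N - h N) * (N.choose (h N))) := by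
  obtain ⟨hp0, hp1⟩ := hp
  obtain ⟨hk0, hk1⟩ := hk
  filter_upwards [hcond] with N hN
  obtain ⟨hN1, hN2, hN3, hN4⟩ := hN
  set b := h N with hb
  set a : ℕ → ℝ := fun j => p ^ j * (1-p) ^ (N - j) * (N.choose j) with ha
  have hq : (0:ℝ) < 1 - p := by linarith
  have hanonneg : ∀ j, 0 ≤ a j := fun j => by
    positivity
  have hmem : b ∈ Finset.Icc b N := Finset.mem_Icc.mpr ⟨le_rfl, hN2⟩
  constructor
  · exact Finset.single_le_sum (fun j _ => hanonneg j) hmem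
  -- key step: a (j+1) ≤ k * a j for b ≤ j < N
  have hstep : ∀ j, b ≤ j → j < N → a (j+1) ≤ k * a j := by
    intro j hbj hjN
    have hsub : N - j = (N - (j+1)) + 1 := by omega
    have hchoose : (N.choose (j+1) : ℝ) * (j+1) = (N.choose j) * (N - j) := by
      have := Nat.choose_succ_right_eq N j
      have : ((N.choose (j+1)) * (j+1) : ℕ) = ((N.choose j) * (N - j) : ℕ) := this
      calc (N.choose (j+1) : ℝ) * (j+1) = (((N.choose (j+1)) * (j+1) : ℕ) : ℝ) := by
            push_cast; ring
        _ = (((N.choose j) * (N - j) : ℕ) : ℝ) := by rw [this]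
        _ = (N.choose j) * ((N:ℝ) - j) := by
            push_cast [Nat.cast_sub hjN.le]; ring
    -- main inequality: p * (N - j) ≤ k * (1-p) * (j+1)
    have hmain : p * ((N:ℝ) - j) ≤ k * (1-p) * (j+1) := by
      have hbj' : (b:ℝ) ≤ j := by exact_mod_cast hbj
      have h1 : (N:ℝ) - j ≤ (N:ℝ) - b := by linarith
      have h2 : (N:ℝ) - b < (1/p - 1) * k * b := by nlinarith [hN1]
      have h3 : (1/p - 1) * k * (b:ℝ) ≤ (1/p - 1) * k * (j+1) := by
        have : (0:ℝ) ≤ (1/p - 1) * k := by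
          have : (0:ℝ) < 1/p - 1 := by
            rw [lt_sub_iff_add_lt, zero_add, lt_div_iff₀ hp0, one_mul]; exact hp1
          positivity
        nlinarith
      have h4 : p * ((1/p - 1) * k * (j+1)) = k * (1-p) * (j+1) := by
        have hpp : p * (1/p) = 1 := by field_simp
        have hexp : p * ((1/p - 1) * k * (j+1)) = (p * (1/p)) * (k*((j:ℝ)+1)) - p * (k*((j:ℝ)+1)) := by ring
        rw [hexp, hpp]; ring
      nlinarith
    have hj1 : (0:ℝ) < (j:ℝ) + 1 := by positivity
    -- reduce to: p * choose (j+1) ≤ k*(1-p)*choose j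
    have hred : p * (N.choose (j+1) : ℝ) ≤ k * (1-p) * (N.choose j) := by
      rw [← mul_le_mul_iff_of_pos_right hj1]
      calc p * (N.choose (j+1):ℝ) * ((j:ℝ)+1) = p * ((N.choose (j+1):ℝ) * ((j:ℝ)+1)) := by ring
        _ = p * ((N.choose j) * ((N:ℝ) - j)) := by rw [hchoose]
        _ = (p * ((N:ℝ) - j)) * (N.choose j) := by ring
        _ ≤ (k * (1-p) * ((j:ℝ)+1)) * (N.choose j) := by
            apply mul_le_mul_of_nonneg_right hmain (by positivity)
        _ = k * (1-p) * (N.choose j) * ((j:ℝ)+1) := by ring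
    have : a (j+1) = p^j * (1-p)^(N-(j+1)) * (p * (N.choose (j+1))) := by
      simp only [ha]; ring
    rw [this]
    have hka : k * a j = p^j * (1-p)^(N-(j+1)) * (k * (1-p) * (N.choose j)) := by
      simp only [ha, hsub]; ring
    rw [hka]
    apply mul_le_mul_of_nonneg_left hred (by positivity)
  -- a j ≤ k^(j-b) * a b for b ≤ j ≤ N
  have hbound : ∀ j, b ≤ j → j ≤ N → a j ≤ k^(j-b) * a b := by
    intro j
    induction j with
    | zero => intro h1 _; interval_cases b; simp [le_refl]
    | succ m ih =>
      intro h1 h2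
      rcases Nat.lt_or_ge b (m+1) with hlt | hge
      · have hbm : b ≤ m := by omega
        have := ih hbm (by omega)
        have hstep' := hstep m hbm (by omega)
        have : a (m+1) ≤ k * (k^(m-b) * a b) := by
          calc a (m+1) ≤ k * a m := hstep'
            _ ≤ k * (k^(m-b) * a b) := by
              apply mul_le_mul_of_nonneg_left this hk0.le
        calc a (m+1) ≤ k * (k^(m-b) * a b) := this
          _ = k^(m+1-b) * a b := by
            rw [show m+1-b = (m-b)+1 by omega, pow_succ]; ring
      · have heq : b = m+1 := by omega
        rw [heq]; simp
  have hsum1 : ∑ j ∈ Finset.Icc b N, a j ≤ ∑ j ∈ Finset.Icc b N, k^(j-b) * a b := by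
    apply Finset.sum_le_sum
    intro j hj
    obtain ⟨h1, h2⟩ := Finset.mem_Icc.mp hj
    exact hbound j h1 h2
  have hsum2 : ∑ j ∈ Finset.Icc b N, k^(j-b) * a b = (∑ i ∈ Finset.range (N+1-b), k^i) * a b := by
    rw [← Finset.sum_mul]
    congr 1
    rw [show Finset.Icc b N = Finset.Ico b (N+1) by rw [Finset.Ico_add_one_right_eq_Icc],
      Finset.sum_Ico_eq_sum_range]
    apply Finset.sum_congr rfl
    intro i _
    congr 1
    omega
  have hgeom : (∑ i ∈ Finset.range (N+1-b), k^i) ≤ 1/(1-k) := by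
    have hkne : k ≠ 1 := ne_of_lt hk1
    rw [geom_sum_eq hkne]
    have heq : (k ^ (N+1-b) - 1) / (k - 1) = (1 - k^(N+1-b)) / (1 - k) := by
      rw [← neg_div_neg_eq]; ring_nf
    rw [heq, div_le_div_iff₀ (by linarith) (by linarith)]
    nlinarith [pow_nonneg hk0.le (N+1-b)]
  calc ∑ j ∈ Finset.Icc b N, a j ≤ (∑ i ∈ Finset.range (N+1-b), k^i) * a b := by
        rw [← hsum2]; exact hsum1
    _ ≤ (1/(1-k)) * a b := by
        apply mul_le_mul_of_nonneg_right hgeom (hanonneg b)
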